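/- The kernel of ι̂_A : ℤ → ℤ^N/(I-Â)ℤ^N equals the image of the map s_A : Ker(I-A) → ℤ sending l = (l₁,…,l_N) to ∑ᵢ lᵢ; i.e., the sequence Ker(I-A) →^{s_A} ℤ →^{ι̂_A} ℤ^N/(I-Â)ℤ^N is exact at ℤ. -/

import Mathlib

/-- Exactness at ℤ: Ker(ι̂_A) = s_A(Ker(I-A)), where s_A(l) = ∑ lᵢ. -/
theorem stmt7 (N : ℕ) (hN : 1 < N) (A : Matrix (Fin N) (Fin N) ℤ) :
    let R : Matrix (Fin N) (Fin N) ℤ := Matrix.of fun i _ => if (i : ℕ) = 0 then 1 else 0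
    let Ahat := A + R - A * R
    {m : ℤ |
      (Submodule.Quotient.mk ((1 - A).mulVec (fun i => if (i : ℕ) = 0 then m else 0)) :
        (Fin N → ℤ) ⧸ LinearMap.range (1 - Ahat).mulVecLin) = 0}
      = (fun l : Fin N → ℤ => ∑ i, l i) '' {l | (1 - A).mulVec l = 0} := by
  intro R Ahat
  have hN0 : 0 < N := by omega
  set i0 : Fin N := ⟨0, hN0⟩ with hi0
  have hcond : ∀ i : Fin N, ((i : ℕ) = 0) = (i = i0) := by
    intro i; simp [Fin.ext_iff, hi0]
  have hfact : (1 - Ahat : Matrix (Fin N) (Fin N) ℤ) = (1 - A) * (1 - R) := by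
    simp only [Ahat]; noncomm_ring
  have hR : ∀ (v : Fin N → ℤ) (i : Fin N),
      R.mulVec v i = if (i : ℕ) = 0 then ∑ j, v j else 0 := by
    intro v i
    simp only [Matrix.mulVec, dotProduct, R, Matrix.of_apply]
    split <;> simp
  have hsum : ∀ k : Fin N → ℤ, ∑ i, (1 - R).mulVec k i = 0 := by
    intro k
    simp only [Matrix.sub_mulVec, Matrix.one_mulVec, Pi.sub_apply, hR,
      Finset.sum_sub_distrib, hcond]
    simp
  ext m
  simp only [Set.mem_setOf_eq, Set.mem_image, Submodule.Quotient.mk_eq_zero,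
    LinearMap.mem_range, Matrix.mulVecLin_apply]
  set e : Fin N → ℤ := fun i => if (i : ℕ) = 0 then m else 0 with he
  have hesum : ∑ i, e i = m := by simp only [he, hcond]; simp
  constructor
  · rintro ⟨k, hk⟩
    refine ⟨e - (1 - R).mulVec k, ?_, ?_⟩
    · simp only [Matrix.mulVec_sub]
      rw [Matrix.mulVec_mulVec, ← hfact, hk, sub_self]
    · simp only [Pi.sub_apply, Finset.sum_sub_distrib, hsum, hesum, sub_zero]
  · rintro ⟨l, hl, hlsum⟩
    refine ⟨fun i => if (i : ℕ) = 0 then 0 else -l i, ?_⟩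
    have hk1 : (1 - R).mulVec (fun i => if (i : ℕ) = 0 then 0 else -l i) = e - l := by
      funext i
      have hks : ∑ j : Fin N, (if (j : ℕ) = 0 then 0 else -l j) = -m + l i0 := by
        have : ∀ j : Fin N, (if (j : ℕ) = 0 then 0 else -l j)
            = -l j + (if j = i0 then l j else 0) := by
          intro j; simp only [hcond]; split <;> simp
        simp [this, Finset.sum_add_distrib, ← hlsum]
      simp only [Matrix.sub_mulVec, Matrix.one_mulVec, Pi.sub_apply, hR, hks, he]
      by_cases h : (i : ℕ) = 0
      · have : i = i0 := by rw [← hcond i] at *; exact h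
        simp [h, this]
        simp only [show ((i0 : ℕ) = 0) from this ▸ h, if_true]
        ring
      · simp [h]
    rw [hfact, ← Matrix.mulVec_mulVec, hk1, Matrix.mulVec_sub, hl, sub_zero]
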